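/- Let T_{λ₁⋯λₙ} be defined recursively by T = [] and T_{λ₁⋯λ_{n+1}} = T_{λ₁⋯λₙ} ++ [λ_{n+1}] ++ T_{λ₁⋯λₙ} ++ [−λ_{n+1}] ++ T_{λ₁⋯λₙ}, and index its entries from 1 to 3ⁿ − 1. Then for every k with 0 ≤ k ≤ n−1 and every i ≥ 0 with the indices in range, the entry at position 3^k(3i+1) equals λ_{k+1} and the entry at position 3^k(3i+2) equals −λ_{k+1}. -/

import Mathlib

/-- Auxiliary recursion: the head of the list is the last parameter λₙ. -/
def foldTAux : List ℤ → List ℤ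
  | [] => []
  | lam :: L => foldTAux L ++ [lam] ++ foldTAux L ++ [-lam] ++ foldTAux L

/-- `foldT [λ₁, …, λₙ]` is the terdragon-type folding sequence `T_{λ₁⋯λₙ}`,
satisfying `foldT [] = []` and
`foldT (Λ ++ [μ]) = foldT Λ ++ [μ] ++ foldT Λ ++ [-μ] ++ foldT Λ`. -/
def foldT (Λ : List ℤ) : List ℤ := foldTAux Λ.reverse

lemma foldTAux_length (L : List ℤ) : (foldTAux L).length = 3 ^ L.length - 1 := by
  induction L with
  | nil => simp [foldTAux]
  | cons lam L ih =>
    have hpow : (1:ℕ) ≤ 3 ^ L.length := Nat.one_le_pow _ _ (by norm_num)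
    simp [foldTAux, ih, pow_succ]
    omega

lemma foldTAux_entry (L : List ℤ) (k : ℕ) (hk : k < L.length) (i j : ℕ)
    (hj : j = 1 ∨ j = 2) (h : 3 ^ k * (3 * i + j) ≤ 3 ^ L.length - 1) :
    (foldTAux L).getD (3 ^ k * (3 * i + j) - 1) 0
      = (if j = 1 then 1 else -1) * L.getD (L.length - 1 - k) 0 := by
  induction L generalizing k i j with
  | nil => simp at hk
  | cons lam L ih =>
    have hpow : (1:ℕ) ≤ 3 ^ L.length := Nat.one_le_pow _ _ (by norm_num)
    have hlen : (foldTAux L).length = 3 ^ L.length - 1 := foldTAux_length L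
    have hk' : k ≤ L.length := Nat.lt_succ_iff.mp (by simpa using hk)
    have hunfold : foldTAux (lam :: L)
        = foldTAux L ++ [lam] ++ foldTAux L ++ [-lam] ++ foldTAux L := rfl
    have hLlen : (lam :: L).length = L.length + 1 := rfl
    have hp1 : (3:ℕ) ^ (lam :: L).length = 3 * 3 ^ L.length := by
      rw [hLlen, pow_succ]; ring
    rw [hunfold]
    rcases eq_or_lt_of_le hk' with hkm | hkm
    · -- k = L.length
      subst hkm
      have hh : 3 ^ L.length * (3 * i + j) ≤ 3 * 3 ^ L.length - 1 := by rw [← hp1]; exact h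
      have h3 : 3 * i + j < 3 := by
        by_contra hcon
        push_neg at hcon
        have := Nat.mul_le_mul_left (3 ^ L.length) hcon
        omega
      have hi : i = 0 := by omega
      subst hi
      have hidx : (lam :: L).length - 1 - L.length = 0 := by rw [hLlen]; omega
      rw [hidx]
      rcases hj with rfl | rfl
      · -- j = 1, index 3^L.length - 1
        have e1 : 3 ^ L.length * (3 * 0 + 1) - 1 = 3 ^ L.length - 1 := by norm_num
        rw [e1]
        rw [List.getD_append _ _ _ _ (by simp [hlen] <;> omega)]
        rw [List.getD_append _ _ _ _ (by simp [hlen] <;> omega)]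
        rw [List.getD_append _ _ _ _ (by simp [hlen] <;> omega)]
        rw [List.getD_append_right _ _ _ _ (by rw [hlen])]
        rw [hlen, Nat.sub_self]
        simp
      · -- j = 2, index 2*3^L.length - 1
        have e1 : 3 ^ L.length * (3 * 0 + 2) - 1 = 2 * 3 ^ L.length - 1 := by ring_nf
        rw [e1]
        rw [List.getD_append _ _ _ _ (by simp [hlen] <;> omega)]
        rw [List.getD_append_right _ _ _ _ (by simp [hlen] <;> omega)]
        have e2 : 2 * 3 ^ L.length - 1 - (foldTAux L ++ [lam] ++ foldTAux L).length = 0 := by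
          simp [hlen]; omega
        rw [e2]
        simp
    · -- k < L.length
      have hapos : 0 < (3:ℕ) ^ k := Nat.pow_pos (by norm_num)
      have htpos : 1 ≤ (3:ℕ) ^ (L.length - 1 - k) := Nat.one_le_pow _ _ (by norm_num)
      have h3m : (3:ℕ) ^ L.length = 3 ^ k * (3 * 3 ^ (L.length - 1 - k)) := by
        rw [← pow_succ', ← pow_add]
        congr 1
        omega
      have hbound : 3 ^ k * (3 * i + j) ≤ 3 * 3 ^ L.length - 1 := by
        rw [← hp1]; exact h
      have hidx : (lam :: L).length - 1 - k = (L.length - 1 - k) + 1 := by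
        rw [hLlen]; omega
      have hjj : 1 ≤ j ∧ j ≤ 2 := by rcases hj with rfl | rfl <;> omega
      have hppos : 0 < 3 ^ k * (3 * i + j) := Nat.mul_pos hapos (by omega)
      rw [hidx, List.getD_cons_succ]
      rcases lt_trichotomy (3 * i + j) (3 * 3 ^ (L.length - 1 - k)) with hc | hc | hc
      · -- first copy
        have hap : 3 ^ k * (3 * i + j) < 3 ^ L.length := by
          rw [h3m]; exact mul_lt_mul_of_pos_left hc hapos
        rw [List.getD_append _ _ _ _ (by simp [hlen] <;> omega)]
        rw [List.getD_append _ _ _ _ (by simp [hlen] <;> omega)]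
        rw [List.getD_append _ _ _ _ (by simp [hlen] <;> omega)]
        rw [List.getD_append _ _ _ _ (by simp [hlen] <;> omega)]
        exact ih k hkm i j hj (by omega)
      · exact absurd hc (by omega)
      · have hap : 3 ^ L.length < 3 ^ k * (3 * i + j) := by
          rw [h3m]; exact mul_lt_mul_of_pos_left hc hapos
        have hit : 3 ^ (L.length - 1 - k) ≤ i := by omega
        rcases lt_trichotomy (3 * i + j) (2 * (3 * 3 ^ (L.length - 1 - k))) with hc2 | hc2 | hc2
        · -- second copy
          have hap2 : 3 ^ k * (3 * i + j) < 2 * 3 ^ L.length := by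
            rw [h3m, show 2 * (3 ^ k * (3 * 3 ^ (L.length - 1 - k)))
                = 3 ^ k * (2 * (3 * 3 ^ (L.length - 1 - k))) from by ring]
            exact mul_lt_mul_of_pos_left hc2 hapos
          have hkey : 3 ^ k * (3 * (i - 3 ^ (L.length - 1 - k)) + j)
              = 3 ^ k * (3 * i + j) - 3 ^ L.length := by
            rw [h3m, ← Nat.mul_sub]
            congr 1
            omega
          rw [List.getD_append _ _ _ _ (by simp [hlen] <;> omega)]
          rw [List.getD_append _ _ _ _ (by simp [hlen] <;> omega)]
          rw [List.getD_append_right _ _ _ _ (by simp [hlen] <;> omega)]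
          have e2 : 3 ^ k * (3 * i + j) - 1 - (foldTAux L ++ [lam]).length
              = 3 ^ k * (3 * (i - 3 ^ (L.length - 1 - k)) + j) - 1 := by
            simp [hlen]; omega
          rw [e2]
          exact ih k hkm (i - 3 ^ (L.length - 1 - k)) j hj (by omega)
        · exact absurd hc2 (by omega)
        · -- third copy
          have hap2 : 2 * 3 ^ L.length < 3 ^ k * (3 * i + j) := by
            rw [h3m, show 2 * (3 ^ k * (3 * 3 ^ (L.length - 1 - k)))
                = 3 ^ k * (2 * (3 * 3 ^ (L.length - 1 - k))) from by ring]
            exact mul_lt_mul_of_pos_left hc2 hapos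
          have hit2 : 2 * 3 ^ (L.length - 1 - k) ≤ i := by omega
          have hkey : 3 ^ k * (3 * (i - 2 * 3 ^ (L.length - 1 - k)) + j)
              = 3 ^ k * (3 * i + j) - 2 * 3 ^ L.length := by
            rw [h3m, show 2 * (3 ^ k * (3 * 3 ^ (L.length - 1 - k)))
                = 3 ^ k * (2 * (3 * 3 ^ (L.length - 1 - k))) from by ring,
              ← Nat.mul_sub]
            congr 1
            omega
          rw [List.getD_append_right _ _ _ _ (by simp [hlen] <;> omega)]
          have e2 : 3 ^ k * (3 * i + j) - 1
                - (foldTAux L ++ [lam] ++ foldTAux L ++ [-lam]).length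
              = 3 ^ k * (3 * (i - 2 * 3 ^ (L.length - 1 - k)) + j) - 1 := by
            simp [hlen]; omega
          rw [e2]
          exact ih k hkm (i - 2 * 3 ^ (L.length - 1 - k)) j hj (by omega)

theorem foldT_entries (Λ : List ℤ) (hΛ : ∀ x ∈ Λ, x = 1 ∨ x = -1)
    (k : ℕ) (hk : k < Λ.length) (i : ℕ) :
    (3 ^ k * (3 * i + 1) ≤ 3 ^ Λ.length - 1 →
      (foldT Λ).getD (3 ^ k * (3 * i + 1) - 1) 0 = Λ.getD k 0) ∧
    (3 ^ k * (3 * i + 2) ≤ 3 ^ Λ.length - 1 →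
      (foldT Λ).getD (3 ^ k * (3 * i + 2) - 1) 0 = -Λ.getD k 0) := by
  have hrl : Λ.reverse.length = Λ.length := List.length_reverse
  have hk' : k < Λ.reverse.length := by rwa [hrl]
  have hget : Λ.reverse.getD (Λ.reverse.length - 1 - k) 0 = Λ.getD k 0 := by
    have h1 : Λ.reverse.length - 1 - k < Λ.reverse.length := by omega
    rw [List.getD_eq_getElem _ _ h1, List.getElem_reverse, List.getD_eq_getElem _ _ hk]
    congr 1
    omega
  constructor
  · intro h
    have := foldTAux_entry Λ.reverse k hk' i 1 (Or.inl rfl) (by rwa [hrl])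
    rw [hget] at this
    simpa [foldT, hrl] using this
  · intro h
    have := foldTAux_entry Λ.reverse k hk' i 2 (Or.inr rfl) (by rwa [hrl])
    rw [hget] at this
    simpa [foldT, hrl] using this
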